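/- Let two cannons alternate attacks along a line: at time t the active cannon sits at position k_t + d (for fixed offset d > 0 in the orthogonal direction) capturing a screen piece at the king's column, forcing the king from column k_t to column k_t + 1. If there are screen pieces at every column k₀+1, ..., k₀+m at the start, then the alternating-cannon process can force the king m columns forward, and the two cannons occupy columns k₀+m−1 and k₀+m at the end. -/
import Mathlib


/-- State of the alternating-cannon ('start gadget') process: the king's
column, the columns of the leading and trailing cannons, and the set of
columns still containing screen pieces. -/
structure CannonState where
  king : ℕ
  lead : ℕ
  trail : ℕ
  screens : Finset ℕ

/-- One step of the process: the trailing cannon leapfrogs to the column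
`king + 1`, capturing the screen there and checking the king, which is forced
one column forward; the old leading cannon becomes the new trailing cannon. -/
def cannonStep (s : CannonState) : CannonState :=
  { king := s.king + 1
    lead := s.king + 1
    trail := s.lead
    screens := s.screens.erase (s.king + 1) }

lemma cannon_aux (k₀ m : ℕ) (s₀ : CannonState)
    (hking : s₀.king = k₀) (hlead : s₀.lead = k₀)
    (hscreens : s₀.screens = (Finset.Icc 1 m).image (k₀ + ·)) :
    ∀ t, (cannonStep^[t] s₀).king = k₀ + t ∧ (cannonStep^[t] s₀).lead = k₀ + t ∧
      (cannonStep^[t] s₀).screens = (Finset.Icc (t+1) m).image (k₀ + ·) ∧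
      (1 ≤ t → (cannonStep^[t] s₀).trail = k₀ + t - 1) := by
  intro t
  induction t with
  | zero =>
    simp only [Function.iterate_zero, id_eq, Nat.add_zero, Nat.zero_add]
    exact ⟨hking, hlead, hscreens, by omega⟩
  | succ n ih =>
    obtain ⟨hk, hl, hs, _⟩ := ih
    rw [Function.iterate_succ_apply']
    refine ⟨by simp [cannonStep, hk, Nat.add_assoc], by simp [cannonStep, hk, Nat.add_assoc],
      ?_, fun _ => by simp [cannonStep, hl]⟩
    simp only [cannonStep, hs, hk]
    ext x
    simp only [Finset.mem_erase, Finset.mem_image, Finset.mem_Icc]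
    constructor
    · rintro ⟨hne, a, ⟨h1, h2⟩, rfl⟩
      exact ⟨a, ⟨by omega, h2⟩, rfl⟩
    · rintro ⟨a, ⟨h1, h2⟩, rfl⟩
      exact ⟨by omega, a, ⟨by omega, h2⟩, rfl⟩

/-- If screens sit at every column `k₀+1, ..., k₀+m` at the start (king at
`k₀`, cannons at `k₀` and `k₀-1`), then the alternating-cannon process forces
the king `m` columns forward: each of the `m` steps captures a screen that is
indeed present, and at the end the king is at `k₀+m` with the two cannons at
columns `k₀+m` and `k₀+m−1`. -/
theorem alternating_cannons (k₀ m : ℕ) (hm : 1 ≤ m) (s₀ : CannonState)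
    (hking : s₀.king = k₀) (hlead : s₀.lead = k₀) (htrail : s₀.trail = k₀ - 1)
    (hscreens : s₀.screens = (Finset.Icc 1 m).image (k₀ + ·)) :
    (∀ t < m, (cannonStep^[t] s₀).king + 1 ∈ (cannonStep^[t] s₀).screens) ∧
    (cannonStep^[m] s₀).king = k₀ + m ∧
    (cannonStep^[m] s₀).lead = k₀ + m ∧
    (cannonStep^[m] s₀).trail = k₀ + m - 1 := by
  have H := cannon_aux k₀ m s₀ hking hlead hscreens
  obtain ⟨hk, hl, hs, ht⟩ := H m
  refine ⟨fun t htm => ?_, hk, hl, ht hm⟩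
  obtain ⟨hk', _, hs', _⟩ := H t
  rw [hk', hs']
  exact Finset.mem_image.2 ⟨t+1, Finset.mem_Icc.2 ⟨le_refl _, by omega⟩, by ring⟩
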